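/- Let s, p, l be the real sequences defined in the context. Then for every integer n ≥ 1, p(n) = (1/6) · ((5^n − 3^n)/5^n) · 3^((3^n − 2n + 3)/4) · 5^((3^n + 2n − 1)/4), where the powers of 3 and 5 are real powers with the indicated (possibly non-integer) exponents. -/

import Mathlib

open Real

noncomputable def hanoiA (n : ℕ) : ℝ := ((3 : ℝ) ^ n + 2 * (n : ℝ) - 1) / 4
noncomputable def hanoiB (n : ℕ) : ℝ := ((3 : ℝ) ^ n - 2 * (n : ℝ) - 1) / 4
noncomputable def hanoiS (n : ℕ) : ℝ := (3 : ℝ) ^ (hanoiA n) * (5 : ℝ) ^ (hanoiB n)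
noncomputable def hanoiR (n : ℕ) : ℝ := (1 / 2) * (((5 : ℝ) / 3) ^ n - 1)

lemma hanoiS_pos (n : ℕ) : 0 < hanoiS n :=
  mul_pos (rpow_pos_of_pos (by norm_num) _) (rpow_pos_of_pos (by norm_num) _)

lemma rpow_three_mul_add {x : ℝ} (hx : 0 < x) (y c : ℝ) :
    x ^ (3 * y + c) = (x ^ y) ^ 3 * x ^ c := by
  rw [Real.rpow_add hx]
  congr 1
  rw [← Real.rpow_natCast (x ^ y) 3, ← Real.rpow_mul hx.le]
  norm_num [mul_comm]

lemma hanoiS_step (n : ℕ) : hanoiS (n + 1) = hanoiS n ^ 3 * 3 * ((5 : ℝ) / 3) ^ n := by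
  have h3 : (0:ℝ) < 3 := by norm_num
  have h5 : (0:ℝ) < 5 := by norm_num
  have hA : hanoiA (n + 1) = 3 * hanoiA n + (1 - (n : ℝ)) := by
    simp only [hanoiA]; push_cast; ring
  have hB : hanoiB (n + 1) = 3 * hanoiB n + (n : ℝ) := by
    simp only [hanoiB]; push_cast; ring
  have e3 : (3:ℝ) ^ hanoiA (n+1) = ((3:ℝ) ^ hanoiA n) ^ 3 * (3 * ((3:ℝ)^n)⁻¹) := by
    rw [hA, rpow_three_mul_add h3, Real.rpow_sub h3, Real.rpow_one, Real.rpow_natCast,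
      div_eq_mul_inv]
  have e5 : (5:ℝ) ^ hanoiB (n+1) = ((5:ℝ) ^ hanoiB n) ^ 3 * (5:ℝ)^n := by
    rw [hB, rpow_three_mul_add h5, Real.rpow_natCast]
  simp only [hanoiS, e3, e5, div_pow]
  field_simp

theorem hanoi_stmt_3 (s p l : ℕ → ℝ)
    (hs1 : s 1 = 3) (hp1 : p 1 = 1) (hl1 : l 1 = 1)
    (hs : ∀ n, 1 ≤ n → s (n + 1) = 3 * s n ^ 3 + 6 * s n ^ 2 * p n)
    (hp : ∀ n, 1 ≤ n → p (n + 1) = s n ^ 3 + 7 * s n ^ 2 * p n + 7 * s n * p n ^ 2 + s n ^ 2 * l n)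
    (hl : ∀ n, 1 ≤ n → l (n + 1) = s n ^ 3 + 12 * s n ^ 2 * p n + 3 * s n ^ 2 * l n + 36 * s n * p n ^ 2 + 12 * s n * p n * l n + 14 * p n ^ 3) :
    ∀ n, 1 ≤ n → p n = (1 / 6) * (((5 : ℝ) ^ n - (3 : ℝ) ^ n) / (5 : ℝ) ^ n) * (3 : ℝ) ^ (((3 : ℝ) ^ n - 2 * (n : ℝ) + 3) / 4) * (5 : ℝ) ^ (((3 : ℝ) ^ n + 2 * (n : ℝ) - 1) / 4) := by
  have key : ∀ n, 1 ≤ n → s n = hanoiS n ∧ p n = hanoiR n * hanoiS n ∧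
      l n = 3 * hanoiR n ^ 2 * hanoiS n := by
    intro n hn
    induction n, hn using Nat.le_induction with
    | base =>
      have hA1 : hanoiA 1 = 1 := by simp [hanoiA]; norm_num
      have hB1 : hanoiB 1 = 0 := by simp [hanoiB]; norm_num
      have hS1 : hanoiS 1 = 3 := by simp [hanoiS, hA1, hB1]
      have hR1 : hanoiR 1 = 1 / 3 := by simp [hanoiR]; norm_num
      refine ⟨by rw [hs1, hS1], by rw [hp1, hR1, hS1]; norm_num,
        by rw [hl1, hR1, hS1]; norm_num⟩
    | succ n hn ih =>
      obtain ⟨ihs, ihp, ihl⟩ := ih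
      have hRsucc : hanoiR (n + 1) = (1/2) * ((5/3 : ℝ) * ((5:ℝ)/3)^n - 1) := by
        simp [hanoiR, pow_succ]; ring
      refine ⟨?_, ?_, ?_⟩
      · rw [hs n hn, ihs, ihp, hanoiS_step, hanoiR]; ring
      · rw [hp n hn, ihs, ihp, ihl, hanoiS_step, hRsucc, hanoiR]; ring
      · rw [hl n hn, ihs, ihp, ihl, hanoiS_step, hRsucc, hanoiR]; ring
  intro n hn
  obtain ⟨-, hpn, -⟩ := key n hn
  rw [hpn]
  have h3 : (0:ℝ) < 3 := by norm_num
  have h5 : (0:ℝ) < 5 := by norm_num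
  have hAB : hanoiA n = hanoiB n + (n : ℝ) := by simp [hanoiA, hanoiB]; ring
  have hE3 : ((3 : ℝ) ^ n - 2 * (n : ℝ) + 3) / 4 = hanoiB n + 1 := by
    simp [hanoiB]; ring
  have hE5 : ((3 : ℝ) ^ n + 2 * (n : ℝ) - 1) / 4 = hanoiB n + (n : ℝ) := by
    simp [hanoiB]; ring
  rw [hE3, hE5]
  simp only [hanoiS, hanoiR, hAB, rpow_add h3, rpow_add h5, rpow_one, rpow_natCast]
  have h3n : ((3:ℝ)) ^ n ≠ 0 := by positivity
  have h5n : ((5:ℝ)) ^ n ≠ 0 := by positivity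
  rw [div_pow]
  field_simp
  ring
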